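/- Let X be a finite set, 𝒟 a collection of nonempty subsets of X containing all two- and three-element subsets, and for each ranking π let ρ^π ∈ ℝ^{𝒟×X} be the associated deterministic choice vector. For t ∈ ℝ^{𝒟×X}, the inner products ρ^π · t are equal for all rankings π if and only if t(D,x) = t(D,y) for every D ∈ 𝒟 and all x, y ∈ D. -/

import Mathlib

open Finset

section helpers
set_option linter.unusedSectionVars false
variable {X : Type*} [Fintype X] [DecidableEq X]

/-- The `π`-best element of a nonempty finite set. -/
noncomputable def topEl {m : ℕ} (π : X ≃ Fin m) (E : Finset X) (hE : E.Nonempty) : X :=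
  π.symm ((E.image π).max' (hE.image π))

lemma topEl_mem {m : ℕ} (π : X ≃ Fin m) (E : Finset X) (hE : E.Nonempty) :
    topEl π E hE ∈ E := by
  have h := (E.image π).max'_mem (hE.image π)
  rw [Finset.mem_image] at h
  obtain ⟨z, hz, hz2⟩ := h
  rw [topEl, ← hz2, Equiv.symm_apply_apply]
  exact hz

lemma le_topEl {m : ℕ} (π : X ≃ Fin m) (E : Finset X) (hE : E.Nonempty)
    {w : X} (hw : w ∈ E) : π w ≤ π (topEl π E hE) := by
  rw [topEl, Equiv.apply_symm_apply]
  exact Finset.le_max' _ _ (Finset.mem_image_of_mem π hw)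

lemma topEl_eq {m : ℕ} (π : X ≃ Fin m) (E : Finset X) (hE : E.Nonempty)
    {z : X} (hz : z ∈ E) (hmax : ∀ w ∈ E, π w ≤ π z) : topEl π E hE = z :=
  π.injective (le_antisymm (hmax _ (topEl_mem π E hE)) (le_topEl π E hE hz))

lemma exists_pair_equiv (D : Finset X) {x y : X} (hx : x ∈ D) (hy : y ∈ D) (hxy : x ≠ y) :
    ∃ π σ : X ≃ Fin (Fintype.card X),
      σ x = π y ∧ σ y = π x ∧
      (∀ z, z ≠ x → z ≠ y → σ z = π z) ∧
      π y < π x ∧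
      (∀ z ∈ D, z ≠ x → z ≠ y → π z < π y) ∧
      (∀ w, w ∉ D → π x < π w) := by
  classical
  set n := Fintype.card X with hn
  let π₀ : X ≃ Fin n := Fintype.equivFin X
  let g : X → Fin 4 := fun z => if z = x then 2 else if z = y then 1 else if z ∈ D then 0 else 3
  let key : X → Fin 4 ×ₗ Fin n := fun z => toLex (g z, π₀ z)
  have keyinj : Function.Injective key := by
    intro a b hab
    have h2 : (g a, π₀ a) = ((g b, π₀ b) : Fin 4 × Fin n) := congrArg ofLex hab
    exact π₀.injective (congrArg Prod.snd h2)
  letI : LinearOrder X := LinearOrder.lift' key keyinj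
  have hlt : ∀ a b : X, a < b ↔ key a < key b := fun a b => Iff.rfl
  let iso : X ≃o Fin n := (Fintype.orderIsoFinOfCardEq X hn.symm).symm
  let π : X ≃ Fin n := iso.toEquiv
  have hmono : ∀ z w : X, g z < g w → π z < π w := by
    intro z w h
    have : z < w := by
      rw [hlt]
      exact Prod.Lex.lt_iff.mpr (Or.inl h)
    exact iso.strictMono this
  have hgy : g y = 1 := by simp [g, Ne.symm hxy]
  have hgx : g x = 2 := by simp [g]
  have hyx : π y < π x := hmono y x (by rw [hgy, hgx]; decide)
  refine ⟨π, π.trans (Equiv.swap (π x) (π y)), ?_, ?_, ?_, hyx, ?_, ?_⟩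
  · simp [Equiv.swap_apply_left]
  · simp [Equiv.swap_apply_right]
  · intro z hzx hzy
    simp only [Equiv.trans_apply]
    exact Equiv.swap_apply_of_ne_of_ne (fun h => hzx (π.injective h))
      (fun h => hzy (π.injective h))
  · intro z hz hzx hzy
    refine hmono z y ?_
    have : g z = 0 := by simp only [g, if_neg hzx, if_neg hzy, if_pos hz]
    rw [this, hgy]; decide
  · intro w hw
    refine hmono x w ?_
    have hwx : w ≠ x := fun h => hw (h ▸ hx)
    have hwy : w ≠ y := fun h => hw (h ▸ hy)
    have : g w = 3 := by simp only [g, if_neg hwx, if_neg hwy, if_neg hw]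
    rw [this, hgx]; decide

end helpers

/-- The deterministic choice vector associated with a ranking `π` of `X`. -/
def rhoVec {X : Type*} [Fintype X] [DecidableEq X] (𝒟 : Finset (Finset X)) {m : ℕ}
    (π : X ≃ Fin m) : ({D : Finset X // D ∈ 𝒟} × X) → ℝ :=
  fun q => if q.2 ∈ q.1.1 ∧ ∀ y ∈ q.1.1, y ≠ q.2 → π y < π q.2 then 1 else 0

lemma sum_rho {X : Type*} [Fintype X] [DecidableEq X]
    (𝒟 : Finset (Finset X)) (hne : ∀ D ∈ 𝒟, Finset.Nonempty D) {m : ℕ}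
    (π : X ≃ Fin m) (t : ({D : Finset X // D ∈ 𝒟} × X) → ℝ) :
    ∑ i, rhoVec 𝒟 π i * t i
      = ∑ E : {D : Finset X // D ∈ 𝒟}, t (E, topEl π E.1 (hne E.1 E.2)) := by
  rw [Fintype.sum_prod_type]
  refine Finset.sum_congr rfl fun E _ => ?_
  rw [Finset.sum_eq_single (topEl π E.1 (hne E.1 E.2))]
  · rw [rhoVec, if_pos, one_mul]
    refine ⟨topEl_mem π E.1 (hne E.1 E.2), fun w hw hwne => ?_⟩
    exact lt_of_le_of_ne (le_topEl π E.1 (hne E.1 E.2) hw)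
      (fun h => hwne (π.injective h))
  · intro z _ hz
    rw [rhoVec, if_neg, zero_mul]
    rintro ⟨hzE, hmax⟩
    exact hz (topEl_eq π E.1 (hne E.1 E.2) hzE fun w hw => by
      rcases eq_or_ne w z with rfl | hwz
      · exact le_refl _
      · exact le_of_lt (hmax w hw hwz)).symm
  · intro h
    exact absurd (Finset.mem_univ _) h

/-- `ρ^π · t` is the same for all rankings `π` iff `t` is constant on each choice set. -/
theorem dot_const_iff {X : Type*} [Fintype X] [DecidableEq X]
    (𝒟 : Finset (Finset X)) (hne : ∀ D ∈ 𝒟, Finset.Nonempty D)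
    (h23 : ∀ D : Finset X, D.card = 2 ∨ D.card = 3 → D ∈ 𝒟)
    (t : ({D : Finset X // D ∈ 𝒟} × X) → ℝ) :
    (∀ π σ : X ≃ Fin (Fintype.card X),
        ∑ i, rhoVec 𝒟 π i * t i = ∑ i, rhoVec 𝒟 σ i * t i) ↔
    ∀ D : {D : Finset X // D ∈ 𝒟}, ∀ x ∈ D.1, ∀ y ∈ D.1, t (D, x) = t (D, y) := by
  classical
  constructor
  · intro H
    suffices key : ∀ n (D : Finset X) (hD : D ∈ 𝒟), D.card ≤ n →
        ∀ x ∈ D, ∀ y ∈ D, t (⟨D, hD⟩, x) = t (⟨D, hD⟩, y) by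
      intro D x hx y hy
      exact key D.1.card D.1 D.2 le_rfl x hx y hy
    intro n
    induction n with
    | zero =>
      intro D hD hcard x hx y _
      have h1 := (hne D hD).card_pos
      omega
    | succ n ih =>
      intro D hD hcard x hx y hy
      rcases eq_or_ne x y with rfl | hxy
      · rfl
      obtain ⟨π, σ, hσx, hσy, hσz, hyx, hlow, hhigh⟩ := exists_pair_equiv D hx hy hxy
      have hDle : ∀ z ∈ D, π z ≤ π x := by
        intro z hz
        rcases eq_or_ne z x with rfl | hzx
        · exact le_refl _
        rcases eq_or_ne z y with rfl | hzy
        · exact le_of_lt hyx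
        · exact le_of_lt ((hlow z hz hzx hzy).trans hyx)
      have hDley : ∀ z ∈ D, z ≠ x → π z ≤ π y := by
        intro z hz hzx
        rcases eq_or_ne z y with rfl | hzy
        · exact le_refl _
        · exact le_of_lt (hlow z hz hzx hzy)
      -- the set of "affected" choice sets
      set P : {D' : Finset X // D' ∈ 𝒟} → Prop :=
        fun E => x ∈ E.1 ∧ y ∈ E.1 ∧ E.1 ⊆ D with hP
      have htop1 : ∀ E : {D' : Finset X // D' ∈ 𝒟}, P E →
          topEl π E.1 (hne E.1 E.2) = x ∧ topEl σ E.1 (hne E.1 E.2) = y := by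
        rintro E ⟨hxE, hyE, hsub⟩
        constructor
        · exact topEl_eq π E.1 (hne E.1 E.2) hxE fun w hw => hDle w (hsub hw)
        · refine topEl_eq σ E.1 (hne E.1 E.2) hyE fun w hw => ?_
          rw [hσy]
          rcases eq_or_ne w x with rfl | hwx
          · rw [hσx]; exact le_of_lt hyx
          rcases eq_or_ne w y with rfl | hwy
          · rw [hσy]
          · rw [hσz w hwx hwy]; exact hDle w (hsub hw)
      have htop2 : ∀ E : {D' : Finset X // D' ∈ 𝒟}, ¬ P E →
          topEl σ E.1 (hne E.1 E.2) = topEl π E.1 (hne E.1 E.2) := by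
        intro E hnP
        by_cases hsub : E.1 ⊆ D
        · by_cases hxE : x ∈ E.1
          · have hyE : y ∉ E.1 := fun h => hnP ⟨hxE, h, hsub⟩
            have h1 : topEl π E.1 (hne E.1 E.2) = x :=
              topEl_eq π E.1 (hne E.1 E.2) hxE fun w hw => hDle w (hsub hw)
            rw [h1]
            refine topEl_eq σ E.1 (hne E.1 E.2) hxE fun w hw => ?_
            rw [hσx]
            rcases eq_or_ne w x with rfl | hwx
            · rw [hσx]
            · have hwy : w ≠ y := fun h => hyE (h ▸ hw)
              rw [hσz w hwx hwy]
              exact hDley w (hsub hw) hwx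
          · by_cases hyE : y ∈ E.1
            · have h1 : topEl π E.1 (hne E.1 E.2) = y :=
                topEl_eq π E.1 (hne E.1 E.2) hyE fun w hw =>
                  hDley w (hsub hw) (fun h => hxE (h ▸ hw))
              rw [h1]
              refine topEl_eq σ E.1 (hne E.1 E.2) hyE fun w hw => ?_
              rw [hσy]
              have hwx : w ≠ x := fun h => hxE (h ▸ hw)
              rcases eq_or_ne w y with rfl | hwy
              · rw [hσy]
              · rw [hσz w hwx hwy]
                exact hDle w (hsub hw)
            · set m := topEl π E.1 (hne E.1 E.2) with hm
              have hmE : m ∈ E.1 := topEl_mem π E.1 (hne E.1 E.2)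
              have hmx : m ≠ x := fun h => hxE (h ▸ hmE)
              have hmy : m ≠ y := fun h => hyE (h ▸ hmE)
              refine topEl_eq σ E.1 (hne E.1 E.2) hmE fun w hw => ?_
              have hwx : w ≠ x := fun h => hxE (h ▸ hw)
              have hwy : w ≠ y := fun h => hyE (h ▸ hw)
              rw [hσz w hwx hwy, hσz m hmx hmy]
              exact le_topEl π E.1 (hne E.1 E.2) hw
        · obtain ⟨w₀, hw₀E, hw₀D⟩ := Finset.not_subset.mp hsub
          set m := topEl π E.1 (hne E.1 E.2) with hm
          have hmE : m ∈ E.1 := topEl_mem π E.1 (hne E.1 E.2)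
          have hmD : m ∉ D := by
            intro hmD
            have h1 : π m < π w₀ := lt_of_le_of_lt (hDle m hmD) (hhigh w₀ hw₀D)
            exact absurd (le_topEl π E.1 (hne E.1 E.2) hw₀E) (not_le.mpr h1)
          have hmx : m ≠ x := fun h => hmD (h ▸ hx)
          have hmy : m ≠ y := fun h => hmD (h ▸ hy)
          refine topEl_eq σ E.1 (hne E.1 E.2) hmE fun w hw => ?_
          rw [hσz m hmx hmy]
          rcases eq_or_ne w x with rfl | hwx
          · rw [hσx]
            exact le_of_lt (lt_of_le_of_lt (hDle y hy) (hhigh m hmD))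
          rcases eq_or_ne w y with rfl | hwy
          · rw [hσy]
            exact le_of_lt (lt_of_le_of_lt (hDle x hx) (hhigh m hmD))
          · rw [hσz w hwx hwy]
            exact le_topEl π E.1 (hne E.1 E.2) hw
      have hsum := H π σ
      rw [sum_rho 𝒟 hne π t, sum_rho 𝒟 hne σ t] at hsum
      have hdiff : ∑ E : {D' : Finset X // D' ∈ 𝒟},
          (t (E, topEl π E.1 (hne E.1 E.2)) - t (E, topEl σ E.1 (hne E.1 E.2))) = 0 := by
        rw [Finset.sum_sub_distrib, hsum, sub_self]
      have hstep : ∑ E : {D' : Finset X // D' ∈ 𝒟},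
          (if P E then t (E, x) - t (E, y) else 0)
          = ∑ E : {D' : Finset X // D' ∈ 𝒟},
          (t (E, topEl π E.1 (hne E.1 E.2)) - t (E, topEl σ E.1 (hne E.1 E.2))) := by
        refine Finset.sum_congr rfl fun E _ => ?_
        by_cases hPE : P E
        · obtain ⟨h1, h2⟩ := htop1 E hPE
          rw [if_pos hPE, h1, h2]
        · rw [if_neg hPE, htop2 E hPE, sub_self]
      have hfilt : ∑ E ∈ Finset.univ.filter P, (t (E, x) - t (E, y)) = 0 := by
        rw [Finset.sum_filter, hstep, hdiff]
      have hDmem : (⟨D, hD⟩ : {D' : Finset X // D' ∈ 𝒟}) ∈ Finset.univ.filter P := by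
        simp only [Finset.mem_filter, Finset.mem_univ, true_and, hP]
        exact ⟨hx, hy, Finset.Subset.refl D⟩
      rw [← Finset.add_sum_erase _ _ hDmem] at hfilt
      have hrest : ∑ E ∈ (Finset.univ.filter P).erase ⟨D, hD⟩, (t (E, x) - t (E, y)) = 0 := by
        refine Finset.sum_eq_zero fun E hE => ?_
        obtain ⟨hEne, hEmem⟩ := Finset.mem_erase.mp hE
        obtain ⟨hxE, hyE, hEsub⟩ : P E := (Finset.mem_filter.mp hEmem).2
        have hEneD : E.1 ≠ D := fun h => hEne (Subtype.ext h)
        have hcardE : E.1.card ≤ n := by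
          have := Finset.card_lt_card (HasSubset.Subset.ssubset_of_ne hEsub hEneD)
          omega
        have := ih E.1 E.2 hcardE x hxE y hyE
        rw [Subtype.coe_eta] at this
        rw [this, sub_self]
      rw [hrest, add_zero] at hfilt
      linarith
  · intro hc π σ
    rw [sum_rho 𝒟 hne π t, sum_rho 𝒟 hne σ t]
    exact Finset.sum_congr rfl fun E _ =>
      hc E _ (topEl_mem π E.1 (hne E.1 E.2)) _ (topEl_mem σ E.1 (hne E.1 E.2))
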